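/- Let p ≥ 3 be a prime, let L be a 3-dimensional ℤ_p-Lie lattice with a diagonalizing basis (x_0,x_1,x_2), i.e., [x_1,x_2] = a_0 x_0, [x_2,x_0] = a_1 x_1, [x_0,x_1] = a_2 x_2 with a_i = u_i p^{s_i}, u_i ∈ ℤ_p^×, s_0 ≤ s_1 ≤ s_2. If s_0 = s_1 < s_2 and −u_0 u_1 is not a square modulo p, then for every e ∈ {1,…,p−1} and f ∈ {0,…,p−1} one has v_p(e² a_0 + f² a_1 + a_2) = v_p(a_0), and for every e ∈ {1,…,p−1} one has v_p(e² a_0 + a_1) = v_p(a_0). -/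

import Mathlib

open PadicInt

private lemma val_of_unit' {p : ℕ} [Fact p.Prime] (c : ℤ_[p]) (hc : IsUnit c) :
    c.valuation = 0 := by
  have h1 := PadicInt.isUnit_iff.mp hc
  have hc0 : c ≠ 0 := by rintro rfl; simp at h1
  rw [PadicInt.norm_eq_zpow_neg_valuation hc0] at h1
  have hp1 : (1 : ℝ) < (p : ℝ) := by
    exact_mod_cast (Fact.out : p.Prime).one_lt
  have : (p : ℝ) ^ (-(c.valuation : ℤ)) = (p : ℝ) ^ (0 : ℤ) := by simpa using h1
  have := zpow_right_injective₀ (by positivity) (ne_of_gt hp1) this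
  omega

private lemma unit_of_toZMod_ne {p : ℕ} [Fact p.Prime] (c : ℤ_[p]) (hc : toZMod c ≠ 0) :
    IsUnit c := by
  by_contra h
  apply hc
  rw [← RingHom.mem_ker, PadicInt.ker_toZMod]
  exact (IsLocalRing.mem_maximalIdeal c).mpr h

private lemma core_ne {p : ℕ} [Fact p.Prime] (u₀ u₁ : ℤ_[p]ˣ)
    (hnonsq : ¬ ∃ t : ZMod p, t * t = toZMod (-((u₀ : ℤ_[p]) * (u₁ : ℤ_[p]))))
    (e g : ℕ) (he : ¬ p ∣ e) :
    toZMod ((e : ℤ_[p]) ^ 2 * (u₀ : ℤ_[p]) + (g : ℤ_[p]) ^ 2 * (u₁ : ℤ_[p])) ≠ 0 := by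
  intro h
  simp only [map_add, map_mul, map_pow, map_natCast] at h
  set E : ZMod p := (e : ZMod p) with hE
  set G : ZMod p := (g : ZMod p)
  set U0 : ZMod p := toZMod (u₀ : ℤ_[p])
  set U1 : ZMod p := toZMod (u₁ : ℤ_[p])
  have hE0 : E ≠ 0 := by
    rw [hE, Ne, ZMod.natCast_eq_zero_iff]
    exact he
  apply hnonsq
  refine ⟨G * U1 / E, ?_⟩
  have hU : toZMod (-((u₀ : ℤ_[p]) * (u₁ : ℤ_[p]))) = -(U0 * U1) := by
    simp [U0, U1]
  rw [hU]
  have hg : G ^ 2 * U1 = -(E ^ 2 * U0) := by linear_combination h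
  field_simp
  ring_nf
  linear_combination U1 * hg

theorem stmt18 (p : ℕ) [Fact p.Prime] (hp3 : 3 ≤ p) {L : Type*} [AddCommGroup L]
    [Module ℤ_[p] L]
    (f : L →ₗ[ℤ_[p]] L →ₗ[ℤ_[p]] L) (hanti : ∀ z : L, f z z = 0)
    (hjacobi : ∀ x y z : L, f (f x y) z + f (f z x) y + f (f y z) x = 0)
    (x : Module.Basis (Fin 3) ℤ_[p] L) (a₀ a₁ a₂ : ℤ_[p]) (u₀ u₁ u₂ : ℤ_[p]ˣ)
    (s₀ s₁ s₂ : ℕ)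
    (ha₀ : a₀ = (u₀ : ℤ_[p]) * (p : ℤ_[p]) ^ s₀)
    (ha₁ : a₁ = (u₁ : ℤ_[p]) * (p : ℤ_[p]) ^ s₁)
    (ha₂ : a₂ = (u₂ : ℤ_[p]) * (p : ℤ_[p]) ^ s₂)
    (hs01 : s₀ ≤ s₁) (hs12 : s₁ ≤ s₂)
    (hdiag : f (x 1) (x 2) = a₀ • x 0 ∧ f (x 2) (x 0) = a₁ • x 1 ∧
             f (x 0) (x 1) = a₂ • x 2)
    (heq : s₀ = s₁) (hlt : s₁ < s₂)
    (hnonsq : ¬ ∃ t : ZMod p, t * t = PadicInt.toZMod (-((u₀ : ℤ_[p]) * (u₁ : ℤ_[p])))) :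
    (∀ e : ℕ, 1 ≤ e → e ≤ p - 1 → ∀ g : ℕ, g ≤ p - 1 →
      Padic.valuation (((e : ℤ_[p]) ^ 2 * a₀ + (g : ℤ_[p]) ^ 2 * a₁ + a₂ : ℤ_[p]) : ℚ_[p]) = Padic.valuation ((a₀ : ℤ_[p]) : ℚ_[p])) ∧
    (∀ e : ℕ, 1 ≤ e → e ≤ p - 1 →
      Padic.valuation (((e : ℤ_[p]) ^ 2 * a₀ + a₁ : ℤ_[p]) : ℚ_[p]) = Padic.valuation ((a₀ : ℤ_[p]) : ℚ_[p])) := by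
  subst ha₀ ha₁ ha₂ heq
  have hp : p.Prime := Fact.out
  have hlt' : s₀ < s₂ := hlt
  have hs2 : (p : ℤ_[p]) ^ s₂ = (p : ℤ_[p]) ^ s₀ * (p : ℤ_[p]) ^ (s₂ - s₀) := by
    rw [← pow_add, Nat.add_sub_cancel' (le_of_lt hlt')]
  have hz : toZMod ((p : ℤ_[p]) ^ (s₂ - s₀)) = 0 := by
    rw [map_pow, map_natCast, ZMod.natCast_self, zero_pow (by omega)]
  have hval0 : ((u₀ : ℤ_[p]) * (p : ℤ_[p]) ^ s₀).valuation = (s₀ : ℤ) := by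
    rw [mul_comm, PadicInt.valuation_p_pow_mul _ _ u₀.isUnit.ne_zero,
      val_of_unit' _ u₀.isUnit, add_zero]
  have hnd : ∀ e : ℕ, 1 ≤ e → e ≤ p - 1 → ¬ p ∣ e := by
    intro e h1 h2 hd
    have := Nat.le_of_dvd (by omega) hd
    omega
  constructor
  · intro e he1 he2 g hg
    have hc : IsUnit ((e : ℤ_[p]) ^ 2 * (u₀ : ℤ_[p]) + (g : ℤ_[p]) ^ 2 * (u₁ : ℤ_[p])
        + (u₂ : ℤ_[p]) * (p : ℤ_[p]) ^ (s₂ - s₀)) := by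
      apply unit_of_toZMod_ne
      rw [map_add, map_mul, hz, mul_zero, add_zero]
      exact core_ne u₀ u₁ hnonsq e g (hnd e he1 he2)
    have hrw : (e : ℤ_[p]) ^ 2 * ((u₀ : ℤ_[p]) * (p : ℤ_[p]) ^ s₀)
        + (g : ℤ_[p]) ^ 2 * ((u₁ : ℤ_[p]) * (p : ℤ_[p]) ^ s₀)
        + (u₂ : ℤ_[p]) * (p : ℤ_[p]) ^ s₂
        = (p : ℤ_[p]) ^ s₀ * ((e : ℤ_[p]) ^ 2 * (u₀ : ℤ_[p])
          + (g : ℤ_[p]) ^ 2 * (u₁ : ℤ_[p])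
          + (u₂ : ℤ_[p]) * (p : ℤ_[p]) ^ (s₂ - s₀)) := by
      rw [hs2]; ring
    rw [PadicInt.valuation_coe, PadicInt.valuation_coe, hrw, PadicInt.valuation_p_pow_mul _ _ hc.ne_zero, val_of_unit' _ hc, add_zero, hval0]
  · intro e he1 he2
    have hc : IsUnit ((e : ℤ_[p]) ^ 2 * (u₀ : ℤ_[p]) + (u₁ : ℤ_[p])) := by
      apply unit_of_toZMod_ne
      have := core_ne u₀ u₁ hnonsq e 1 (hnd e he1 he2)
      simpa using this
    have hrw : (e : ℤ_[p]) ^ 2 * ((u₀ : ℤ_[p]) * (p : ℤ_[p]) ^ s₀)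
        + (u₁ : ℤ_[p]) * (p : ℤ_[p]) ^ s₀
        = (p : ℤ_[p]) ^ s₀ * ((e : ℤ_[p]) ^ 2 * (u₀ : ℤ_[p]) + (u₁ : ℤ_[p])) := by ring
    rw [PadicInt.valuation_coe, PadicInt.valuation_coe, hrw, PadicInt.valuation_p_pow_mul _ _ hc.ne_zero, val_of_unit' _ hc, add_zero, hval0]
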